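/- Let P be a convex polytope with ℓ nonconstant on edges, and suppose the partition O^- = {O^-(v)} is a stratification of P. Then the negative Bruhat relation B^- coincides with the chain order C; in particular B^- is a partial order on the vertices of P. -/

import Mathlib

open Set

variable {V : Type*} [NormedAddCommGroup V] [NormedSpace ℝ V]

/-- A (nonempty) convex polytope: the convex hull of a nonempty finite set of points. -/
def IsPolytope (P : Set V) : Prop :=
  ∃ s : Finset V, s.Nonempty ∧ P = convexHull ℝ (s : Set V)

/-- A (nonempty exposed) face of a polytope. -/
def IsFace (P F : Set V) : Prop :=
  F.Nonempty ∧ IsExposed ℝ P F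

/-- A vertex of a polytope: a point whose singleton is a face. -/
def IsVertex (P : Set V) (v : V) : Prop := IsFace P {v}

/-- An edge of a polytope: a face which is a nondegenerate segment. -/
def IsEdge (P : Set V) (v w : V) : Prop := v ≠ w ∧ IsFace P (segment ℝ v w)

/-- `ℓ` attains its maximum on `G` at `v`. -/
def MaxAt (ℓ : V →L[ℝ] ℝ) (G : Set V) (v : V) : Prop := v ∈ G ∧ ∀ x ∈ G, ℓ x ≤ ℓ v

/-- `ℓ` attains its minimum on `G` at `v`. -/
def MinAt (ℓ : V →L[ℝ] ℝ) (G : Set V) (v : V) : Prop := v ∈ G ∧ ∀ x ∈ G, ℓ v ≤ ℓ x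

/-- `ℓ` is nonconstant on every edge of `P`. -/
def NonconstOnEdges (P : Set V) (ℓ : V →L[ℝ] ℝ) : Prop :=
  ∀ v w, IsEdge P v w → ℓ v ≠ ℓ w

/-- Directed edge: an edge oriented by increasing `ℓ`. -/
def DirEdge (P : Set V) (ℓ : V →L[ℝ] ℝ) (v w : V) : Prop := IsEdge P v w ∧ ℓ v < ℓ w

/-- The witness relation `O(v,w)`: some face of `P` has ℓ-minimum at `v` and
ℓ-maximum at `w`. -/
def ORel (P : Set V) (ℓ : V →L[ℝ] ℝ) (v w : V) : Prop :=
  ∃ G, IsFace P G ∧ MinAt ℓ G v ∧ MaxAt ℓ G w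

/-- `O⁻(v)`: the union of relative interiors of faces of `P` on which `ℓ` attains
its maximum at `v`. -/
def Oneg (P : Set V) (ℓ : V →L[ℝ] ℝ) (v : V) : Set V :=
  ⋃ G ∈ {G : Set V | IsFace P G ∧ MaxAt ℓ G v}, intrinsicInterior ℝ G

/-- `O⁺(v)`: the union of relative interiors of faces of `P` on which `ℓ` attains
its minimum at `v`. -/
def Opos (P : Set V) (ℓ : V →L[ℝ] ℝ) (v : V) : Set V :=
  ⋃ G ∈ {G : Set V | IsFace P G ∧ MinAt ℓ G v}, intrinsicInterior ℝ G

/-- `F⁻(v)`: the closure of `O⁻(v)`. -/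
def Fneg (P : Set V) (ℓ : V →L[ℝ] ℝ) (v : V) : Set V := closure (Oneg P ℓ v)

/-- `F⁺(v)`: the closure of `O⁺(v)`. -/
def Fpos (P : Set V) (ℓ : V →L[ℝ] ℝ) (v : V) : Set V := closure (Opos P ℓ v)

/-- The partition `O⁻` is a stratification. -/
def StratNeg (P : Set V) (ℓ : V →L[ℝ] ℝ) : Prop :=
  ∀ u w : V, IsVertex P u → IsVertex P w →
    (Oneg P ℓ u ∩ Fneg P ℓ w).Nonempty → Oneg P ℓ u ⊆ Fneg P ℓ w

/-- The dimension of a subset of `V` (dimension of its affine span). -/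
noncomputable def dimS (F : Set V) : ℕ := Module.finrank ℝ (vectorSpan ℝ F)

open scoped Classical in
/-- The set of points of `t` at which `l` is maximal. -/
noncomputable def amax (l : V →L[ℝ] ℝ) (t : Finset V) : Finset V :=
  t.filter (fun y => ∀ z ∈ t, l z ≤ l y)

lemma mem_amax {l : V →L[ℝ] ℝ} {t : Finset V} {y : V} :
    y ∈ amax l t ↔ y ∈ t ∧ ∀ z ∈ t, l z ≤ l y := by
  classical simp [amax]

lemma amax_subset {l : V →L[ℝ] ℝ} {t : Finset V} : amax l t ⊆ t := by
  classical exact Finset.filter_subset _ _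

lemma amax_nonempty (l : V →L[ℝ] ℝ) {t : Finset V} (ht : t.Nonempty) :
    (amax l t).Nonempty := by
  obtain ⟨b, hb, hmax⟩ := t.exists_max_image l ht
  exact ⟨b, mem_amax.2 ⟨hb, hmax⟩⟩

/-- On the convex hull, `l` is bounded by its max over the finite set. -/
lemma le_max_on_hull {l : V →L[ℝ] ℝ} {t : Finset V} {y : V}
    (hy : y ∈ amax l t) {x : V} (hx : x ∈ convexHull ℝ (t : Set V)) : l x ≤ l y := by
  have h : convexHull ℝ (t : Set V) ⊆ {z | l z ≤ l y} := by
    apply convexHull_min _ (convex_halfSpace_le ⟨l.map_add, l.map_smul⟩ (l y))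
    intro z hz
    exact (mem_amax.1 hy).2 z hz
  exact h hx

/-- The exposed face of the hull determined by `l` is the hull of `amax l t`. -/
lemma face_hull_amax (l : V →L[ℝ] ℝ) {t : Finset V} (ht : t.Nonempty) :
    {x ∈ convexHull ℝ (t : Set V) | ∀ y ∈ convexHull ℝ (t : Set V), l y ≤ l x}
      = convexHull ℝ (amax l t : Set V) := by
  obtain ⟨y₀, hy₀⟩ := amax_nonempty l ht
  have hy₀t : y₀ ∈ t := amax_subset hy₀
  have hconst : ∀ y ∈ amax l t, l y = l y₀ := fun y hy =>
    le_antisymm ((mem_amax.1 hy₀).2 y (amax_subset hy)) ((mem_amax.1 hy).2 y₀ hy₀t)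
  ext x
  constructor
  · rintro ⟨hxh, hxmax⟩
    have hxc : l x = l y₀ := le_antisymm
      (le_max_on_hull hy₀ hxh) (hxmax y₀ (subset_convexHull ℝ _ hy₀t))
    rw [Finset.convexHull_eq] at hxh ⊢
    obtain ⟨w, hw0, hw1, hwx⟩ := hxh
    -- weights outside `amax l t` vanish
    have hsum : ∑ y ∈ t, w y * (l y₀ - l y) = 0 := by
      have hx' : t.centerMass w id = x := hwx
      have hlx : ∑ y ∈ t, w y * l y = l y₀ := by
        rw [Finset.centerMass_eq_of_sum_1 _ _ hw1] at hx'
        have : l (∑ y ∈ t, w y • id y) = l x := by rw [hx']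
        simpa [map_sum, mul_comm, hxc] using this
      have : ∑ y ∈ t, w y * l y₀ = l y₀ := by
        rw [← Finset.sum_mul, hw1, one_mul]
      calc ∑ y ∈ t, w y * (l y₀ - l y)
          = ∑ y ∈ t, (w y * l y₀ - w y * l y) := by
            refine Finset.sum_congr rfl fun y _ => by ring
        _ = 0 := by rw [Finset.sum_sub_distrib, this, hlx, sub_self]
    have hzero : ∀ y ∈ t, y ∉ amax l t → w y = 0 := by
      intro y hyt hyn
      have hterm : ∀ y ∈ t, 0 ≤ w y * (l y₀ - l y) := fun y hy =>
        mul_nonneg (hw0 y hy)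
          (sub_nonneg.2 (le_max_on_hull hy₀ (subset_convexHull ℝ _ hy)))
      have := (Finset.sum_eq_zero_iff_of_nonneg hterm).1 hsum y hyt
      rcases mul_eq_zero.1 this with h | h
      · exact h
      · exfalso
        apply hyn
        refine mem_amax.2 ⟨hyt, fun z hz => ?_⟩
        have : l y = l y₀ := by linarith [sub_eq_zero.1 h]
        rw [this]
        exact le_max_on_hull hy₀ (subset_convexHull ℝ _ hz)
    refine ⟨w, fun y hy => hw0 y (amax_subset hy), ?_, ?_⟩
    · rw [Finset.sum_subset amax_subset (fun y hy hyn => hzero y hy hyn), hw1]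
    · exact (Finset.centerMass_subset id amax_subset
        (fun y hy hyn => hzero y hy hyn)).trans hwx
  · intro hx
    have hxt : x ∈ convexHull ℝ (t : Set V) :=
      convexHull_mono (by exact_mod_cast amax_subset) hx
    have hxc : l x = l y₀ := by
      have hsub : (amax l t : Set V) ⊆ {z | l z = l y₀} := fun y hy => hconst y hy
      have : convexHull ℝ (amax l t : Set V) ⊆ {z | l z = l y₀} :=
        convexHull_min hsub (convex_hyperplane ⟨l.map_add, l.map_smul⟩ (l y₀))
      exact this hx
    exact ⟨hxt, fun y hy => by rw [hxc]; exact le_max_on_hull hy₀ hy⟩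

/-- `u` is the argmax subset of `t` for some continuous linear functional. -/
def IsAF (t u : Finset V) : Prop := ∃ l : V →L[ℝ] ℝ, u = amax l t

lemma IsAF.refl (t : Finset V) : IsAF t t :=
  ⟨0, by ext y; simp [mem_amax]⟩

lemma IsAF.subset {t u : Finset V} (h : IsAF t u) : u ⊆ t := by
  obtain ⟨l, rfl⟩ := h; exact amax_subset

lemma IsAF.nonempty {t u : Finset V} (h : IsAF t u) (ht : t.Nonempty) : u.Nonempty := by
  obtain ⟨l, rfl⟩ := h; exact amax_nonempty l ht

lemma isFace_iff {t : Finset V} (ht : t.Nonempty) {F : Set V} :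
    IsFace (convexHull ℝ (t : Set V)) F ↔ ∃ u : Finset V, IsAF t u ∧ F = convexHull ℝ (u : Set V) := by
  constructor
  · rintro ⟨hne, hexp⟩
    obtain ⟨l, hl⟩ := hexp hne
    exact ⟨amax l t, ⟨l, rfl⟩, by rw [hl, face_hull_amax l ht]⟩
  · rintro ⟨u, ⟨l, rfl⟩, rfl⟩
    refine ⟨?_, fun _ => ⟨l, (face_hull_amax l ht).symm⟩⟩
    obtain ⟨y, hy⟩ := amax_nonempty l ht
    exact ⟨y, subset_convexHull ℝ _ hy⟩

lemma IsAF.isFace {t u : Finset V} (ht : t.Nonempty) (h : IsAF t u) :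
    IsFace (convexHull ℝ (t : Set V)) (convexHull ℝ (u : Set V)) :=
  (isFace_iff ht).2 ⟨u, h, rfl⟩

/-- Transitivity of the argmax-face relation (via a small perturbation). -/
lemma IsAF.trans {t u w : Finset V} (htu : IsAF t u) (huw : IsAF u w)
    (hu : u.Nonempty) : IsAF t w := by
  obtain ⟨l₁, rfl⟩ := htu
  obtain ⟨l₂, rfl⟩ := huw
  obtain ⟨p, hp⟩ := amax_nonempty l₂ hu
  have hpu : p ∈ amax l₁ t := amax_subset hp
  have hpt : p ∈ t := amax_subset hpu
  set L := l₁ p with hL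
  set M := l₂ p with hM
  have hl₁u : ∀ y ∈ amax l₁ t, l₁ y = L := fun y hy =>
    le_antisymm ((mem_amax.1 hpu).2 y (amax_subset hy)) ((mem_amax.1 hy).2 p hpt)
  have hl₁max : ∀ z ∈ t, l₁ z ≤ L := (mem_amax.1 hpu).2
  have hl₂max : ∀ z ∈ amax l₁ t, l₂ z ≤ M := (mem_amax.1 hp).2
  have hl₁lt : ∀ z ∈ t, z ∉ amax l₁ t → l₁ z < L := by
    intro z hz hzn
    rcases lt_or_eq_of_le (hl₁max z hz) with h | h
    · exact h
    · exact absurd (mem_amax.2 ⟨hz, fun y hy => h ▸ hl₁max y hy⟩) hzn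
  -- choose ε
  obtain ⟨ε, hε0, hε⟩ : ∃ ε : ℝ, 0 < ε ∧
      ∀ z ∈ t, z ∉ amax l₁ t → l₁ z + ε * l₂ z < L + ε * M := by
    classical
    set tu := t.filter (fun z => z ∉ amax l₁ t) with htu
    rcases tu.eq_empty_or_nonempty with hemp | hne
    · refine ⟨1, one_pos, fun z hz hzn => ?_⟩
      exact absurd (Finset.mem_filter.2 ⟨hz, hzn⟩) (by rw [← htu, hemp]; simp)
    · set e : V → ℝ := fun z => (L - l₁ z) / (1 + |l₂ z - M|) with he
      refine ⟨min 1 (tu.inf' hne e), lt_min one_pos ?_, ?_⟩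
      · rw [Finset.lt_inf'_iff]
        intro z hz
        have hz' := Finset.mem_filter.1 hz
        exact div_pos (sub_pos.2 (hl₁lt z hz'.1 hz'.2))
          (by positivity)
      · intro z hz hzn
        have hztu : z ∈ tu := Finset.mem_filter.2 ⟨hz, hzn⟩
        set ε := min 1 (tu.inf' hne e) with hεdef
        have hεpos : 0 < ε := lt_min one_pos (by
          rw [Finset.lt_inf'_iff]
          intro z hz
          have hz' := Finset.mem_filter.1 hz
          exact div_pos (sub_pos.2 (hl₁lt z hz'.1 hz'.2)) (by positivity))
        have hεle : ε ≤ e z := (min_le_right _ _).trans (Finset.inf'_le e hztu)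
        have hLz : 0 < L - l₁ z := sub_pos.2 (hl₁lt z hz hzn)
        rcases le_or_gt (l₂ z) M with hle | hgt
        · have : ε * l₂ z ≤ ε * M := mul_le_mul_of_nonneg_left hle hεpos.le
          nlinarith
        · have hq : 0 < l₂ z - M := sub_pos.2 hgt
          have habs : |l₂ z - M| = l₂ z - M := abs_of_pos hq
          have h1 : ε * (l₂ z - M) ≤ e z * (l₂ z - M) :=
            mul_le_mul_of_nonneg_right hεle hq.le
          have h2 : e z * (l₂ z - M) < L - l₁ z := by
            rw [he]
            simp only [habs]
            rw [div_mul_eq_mul_div, div_lt_iff₀ (by positivity)]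
            nlinarith
          nlinarith
  refine ⟨l₁ + ε • l₂, ?_⟩
  have key : ∀ z ∈ t, l₁ z + ε * l₂ z ≤ L + ε * M := by
    intro z hz
    by_cases hzu : z ∈ amax l₁ t
    · have := hl₂max z hzu
      have := hl₁u z hzu
      nlinarith
    · exact (hε z hz hzu).le
  ext y
  constructor
  · intro hy
    have hyu : y ∈ amax l₁ t := amax_subset hy
    have hyt : y ∈ t := amax_subset hyu
    have hyL : l₁ y = L := hl₁u y hyu
    have hyM : l₂ y = M := le_antisymm (hl₂max y hyu) ((mem_amax.1 hy).2 p hpu)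
    refine mem_amax.2 ⟨hyt, fun z hz => ?_⟩
    have hk := key z hz
    simp only [ContinuousLinearMap.add_apply, ContinuousLinearMap.coe_smul',
      Pi.smul_apply, smul_eq_mul]
    rw [hyL, hyM] at *
    linarith
  · intro hy
    obtain ⟨hyt, hymax⟩ := mem_amax.1 hy
    have h1 := hymax p hpt
    simp only [ContinuousLinearMap.add_apply, ContinuousLinearMap.coe_smul',
      Pi.smul_apply, smul_eq_mul] at h1
    have h2 := key y hyt
    have hy' : l₁ y + ε * l₂ y = L + ε * M := le_antisymm h2 (by linarith)
    have hyu : y ∈ amax l₁ t := by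
      by_contra hyn
      exact absurd hy' (ne_of_lt (hε y hyt hyn))
    have hyM : l₂ y = M := by
      have := hl₁u y hyu
      nlinarith
    exact mem_amax.2 ⟨hyu, fun z hz => by rw [hyM]; exact hl₂max z hz⟩

lemma vertex_iff {t : Finset V} (ht : t.Nonempty) {v : V} :
    IsVertex (convexHull ℝ (t : Set V)) v ↔ IsAF t {v} := by
  constructor
  · intro hv
    obtain ⟨u, hu, huv⟩ := (isFace_iff ht).1 hv
    have hune : u.Nonempty := hu.nonempty ht
    have husub : (u : Set V) ⊆ {v} := fun y hy =>
      huv ▸ subset_convexHull ℝ (u : Set V) hy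
    have : u = {v} := by
      obtain ⟨y, hy⟩ := hune
      have hyv : y = v := husub hy
      apply Finset.eq_singleton_iff_unique_mem.2
      exact ⟨hyv ▸ hy, fun z hz => husub hz⟩
    exact this ▸ hu
  · intro h
    have : convexHull ℝ (({v} : Finset V) : Set V) = {v} := by simp
    refine ⟨⟨v, rfl⟩, ?_⟩
    have := (isFace_iff ht).2 ⟨{v}, h, this.symm⟩
    exact this.2

lemma IsAF.strict_exposure {t : Finset V} {v : V} (h : IsAF t {v}) :
    v ∈ t ∧ ∃ g : V →L[ℝ] ℝ, ∀ y ∈ t, y ≠ v → g y < g v := by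
  obtain ⟨g, hg⟩ := h
  have hv : v ∈ amax g t := by rw [← hg]; exact Finset.mem_singleton_self v
  obtain ⟨hvt, hvmax⟩ := mem_amax.1 hv
  refine ⟨hvt, g, fun y hy hyv => ?_⟩
  rcases lt_or_eq_of_le (hvmax y hy) with hlt | heq
  · exact hlt
  · exfalso
    have : y ∈ amax g t := mem_amax.2 ⟨hy, fun z hz => heq ▸ hvmax z hz⟩
    rw [← hg] at this
    exact hyv (Finset.mem_singleton.1 this)

lemma isAF_singleton_of_strict {t : Finset V} {v : V} (hvt : v ∈ t)
    {g : V →L[ℝ] ℝ} (hg : ∀ y ∈ t, y ≠ v → g y < g v) : IsAF t {v} := by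
  refine ⟨g, ?_⟩
  ext y
  simp only [Finset.mem_singleton, mem_amax]
  constructor
  · intro hyv
    constructor
    · rw [hyv]; exact hvt
    · intro z hz
      rw [hyv]
      by_cases hzv : z = v
      · rw [hzv]
      · exact (hg z hz hzv).le
  · rintro ⟨hyt, hymax⟩
    by_contra hyv
    exact absurd (hymax v hvt) (not_le.2 (hg y hyt hyv))

/-- A face of a face is a face. -/
lemma face_lift {t u : Finset V} (ht : t.Nonempty) (htu : IsAF t u)
    (hu : u.Nonempty) {F : Set V}
    (hF : IsFace (convexHull ℝ (u : Set V)) F) :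
    IsFace (convexHull ℝ (t : Set V)) F := by
  obtain ⟨w, huw, rfl⟩ := (isFace_iff hu).1 hF
  exact (isFace_iff ht).2 ⟨w, htu.trans huw hu, rfl⟩

/-- The parametric pivot: given a vertex `v` of `hull t` strictly exposed by `g` and any
functional `f`, the maximizers of the ratio `(f y - f v)/(g v - g y)` over `t \ {v}`,
together with `v`, form a face of `hull t` containing `v` and a ratio-maximizer. -/
lemma pivot {t : Finset V} {v : V} (hvt : v ∈ t) {g : V →L[ℝ] ℝ}
    (hg : ∀ y ∈ t, y ≠ v → g y < g v) (f : V →L[ℝ] ℝ)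
    {y₁ : V} (hy₁ : y₁ ∈ t) (hy₁v : y₁ ≠ v) :
    ∃ (u : Finset V) (lam : V → ℝ) (lstar : ℝ),
      IsAF t u ∧
      (lam = fun y => (f y - f v) / (g v - g y)) ∧
      (∀ y ∈ t, y ≠ v → lam y ≤ lstar) ∧
      (∃ ystar ∈ u, ystar ≠ v ∧ lam ystar = lstar) ∧
      (∀ y, y ∈ u ↔ (y = v ∨ (y ∈ t ∧ y ≠ v ∧ lam y = lstar))) := by
  classical
  set lam : V → ℝ := fun y => (f y - f v) / (g v - g y) with hlam
  set tv := t.filter (fun y => y ≠ v) with htv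
  have htvne : tv.Nonempty := ⟨y₁, Finset.mem_filter.2 ⟨hy₁, hy₁v⟩⟩
  obtain ⟨ys, hys, hysmax⟩ := tv.exists_max_image lam htvne
  obtain ⟨hyst, hysv⟩ := Finset.mem_filter.1 hys
  set lstar := lam ys with hlstar
  set h : V →L[ℝ] ℝ := f + lstar • g with hh
  have happ : ∀ z, h z = f z + lstar * g z := fun z => by
    simp [hh, ContinuousLinearMap.add_apply]
  have hgap : ∀ y ∈ t, y ≠ v → 0 < g v - g y := fun y hy hyv => sub_pos.2 (hg y hy hyv)
  have hcancel : ∀ y ∈ t, y ≠ v → f y - f v = lam y * (g v - g y) := by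
    intro y hy hyv
    rw [hlam]
    field_simp [ne_of_gt (hgap y hy hyv)]
  have hkey : ∀ y ∈ t, y ≠ v → h y - h v = (g v - g y) * (lam y - lstar) := by
    intro y hy hyv
    rw [happ, happ]
    have hc := hcancel y hy hyv
    linear_combination hc
  have hmax : ∀ z ∈ t, h z ≤ h v := by
    intro z hz
    by_cases hzv : z = v
    · rw [hzv]
    · have h1 := hkey z hz hzv
      have h2 : lam z ≤ lstar := hysmax z (Finset.mem_filter.2 ⟨hz, hzv⟩)
      nlinarith [hgap z hz hzv]
  refine ⟨amax h t, lam, lstar, ⟨h, rfl⟩, rfl, fun y hy hyv => hysmax y (Finset.mem_filter.2 ⟨hy, hyv⟩),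
    ⟨ys, ?_, hysv, rfl⟩, fun y => ?_⟩
  · exact mem_amax.2 ⟨hyst, fun z hz => by
      have := hkey ys hyst hysv
      have := hmax z hz
      nlinarith⟩
  · constructor
    · intro hy
      obtain ⟨hyt, hymax⟩ := mem_amax.1 hy
      by_cases hyv : y = v
      · exact Or.inl hyv
      · refine Or.inr ⟨hyt, hyv, ?_⟩
        have h1 : h v ≤ h y := hymax v hvt
        have h2 := hkey y hyt hyv
        have h3 : lam y ≤ lstar := hysmax y (Finset.mem_filter.2 ⟨hyt, hyv⟩)
        nlinarith [hgap y hyt hyv]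
    · rintro (rfl | ⟨hyt, hyv, hylam⟩)
      · exact mem_amax.2 ⟨hvt, hmax⟩
      · refine mem_amax.2 ⟨hyt, fun z hz => ?_⟩
        have h2 := hkey y hyt hyv
        rw [hylam] at h2
        have : h y = h v := by nlinarith
        rw [this]
        exact hmax z hz

/-- A polytope that is the hull of collinear points through an exposed vertex is a segment. -/
lemma whole_is_face {t : Finset V} (ht : t.Nonempty) {S : Set V}
    (hS : S = convexHull ℝ (t : Set V)) : IsFace (convexHull ℝ (t : Set V)) S := by
  obtain ⟨y, hy⟩ := ht
  refine ⟨⟨y, hS ▸ subset_convexHull ℝ _ hy⟩, fun _ => ⟨0, ?_⟩⟩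
  rw [hS]; ext x; simp

/-- Every strictly exposed vertex of a polytope with at least two points has an edge. -/
lemma exists_edge : ∀ (n : ℕ) (t : Finset V) (v y₀ : V), t.card ≤ n → IsAF t {v} →
    y₀ ∈ t → y₀ ≠ v →
    ∃ w ∈ t, w ≠ v ∧ IsFace (convexHull ℝ (t : Set V)) (segment ℝ v w) := by
  intro n
  induction n with
  | zero => intro t v y₀ hcard _ hy₀ _
            exact absurd (Finset.card_pos.2 ⟨y₀, hy₀⟩) (by omega)
  | succ n ih =>
    intro t v y₀ hcard hAF hy₀t hy₀v
    obtain ⟨hvt, g, hg⟩ := hAF.strict_exposure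
    have ht : t.Nonempty := ⟨v, hvt⟩
    by_cases hcol : ∀ y1 ∈ t, y1 ≠ v → ∀ y2 ∈ t, y2 ≠ v →
        (g v - g y2) • (y1 - v) = (g v - g y1) • (y2 - v)
    · -- collinear case : the hull is a segment
      set d := y₀ - v with hd
      have hdne : d ≠ 0 := sub_ne_zero.2 hy₀v
      have h0 : g v - g y₀ ≠ 0 := ne_of_gt (sub_pos.2 (hg y₀ hy₀t hy₀v))
      set μ : V → ℝ := fun y => (g v - g y) / (g v - g y₀) with hμ
      have hμv : μ v = 0 := by simp [hμ]
      have hμy₀ : μ y₀ = 1 := div_self h0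
      have hkey : ∀ y ∈ t, y - v = μ y • d := by
        intro y hy
        by_cases hyv : y = v
        · rw [hyv, hμv, sub_self, zero_smul]
        · have h1 := hcol y hy hyv y₀ hy₀t hy₀v
          have h2 : (g v - g y₀)⁻¹ • ((g v - g y₀) • (y - v))
              = (g v - g y₀)⁻¹ • ((g v - g y) • d) := by rw [h1]
          rw [inv_smul_smul₀ h0, smul_smul] at h2
          rw [h2, hμ]
          congr 1
          field_simp
      have hμnn : ∀ y ∈ t, 0 ≤ μ y := by
        intro y hy
        by_cases hyv : y = v
        · rw [hyv, hμv]
        · exact le_of_lt (div_pos (sub_pos.2 (hg y hy hyv)) (sub_pos.2 (hg y₀ hy₀t hy₀v)))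
      obtain ⟨b, hbt, hbmax⟩ := t.exists_max_image μ ht
      have hμb : 1 ≤ μ b := hμy₀ ▸ hbmax y₀ hy₀t
      have hμbpos : 0 < μ b := lt_of_lt_of_le one_pos hμb
      have hbv : b ≠ v := fun h => by rw [h, hμv] at hμbpos; exact lt_irrefl 0 hμbpos
      have hsub : (t : Set V) ⊆ segment ℝ v b := by
        intro y hy
        rw [segment_eq_image']
        refine ⟨μ y / μ b, ⟨div_nonneg (hμnn y hy) hμbpos.le,
          (div_le_one hμbpos).2 (hbmax y hy)⟩, ?_⟩
        show v + (μ y / μ b) • (b - v) = y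
        rw [show b - v = μ b • d from hkey b hbt, smul_smul,
          div_mul_cancel₀ _ (ne_of_gt hμbpos), ← hkey y hy]
        abel
      have hseg : segment ℝ v b = convexHull ℝ (t : Set V) :=
        Subset.antisymm
          ((convex_convexHull ℝ _).segment_subset (subset_convexHull ℝ _ hvt)
            (subset_convexHull ℝ _ hbt))
          (convexHull_min hsub (convex_segment v b))
      exact ⟨b, hbt, hbv, whole_is_face ht hseg⟩
    · -- non-collinear case : pivot to a smaller face
      push_neg at hcol
      obtain ⟨y1, hy1t, hy1v, y2, hy2t, hy2v, hne⟩ := hcol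
      obtain ⟨f, hf⟩ := SeparatingDual.exists_separating_of_ne (R := ℝ) hne
      obtain ⟨u, lam, lstar, hAFu, hlamdef, hub, ⟨ys, hysu, hysv, hyslam⟩, hmem⟩ :=
        pivot hvt hg f hy1t hy1v
      have hut : u ⊆ t := hAFu.subset
      have hvu : v ∈ u := (hmem v).2 (Or.inl rfl)
      have hgap1 : g v - g y1 ≠ 0 := ne_of_gt (sub_pos.2 (hg y1 hy1t hy1v))
      have hgap2 : g v - g y2 ≠ 0 := ne_of_gt (sub_pos.2 (hg y2 hy2t hy2v))
      have hlamne : lam y1 ≠ lam y2 := by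
        intro heq
        apply hf
        have e1 : f y1 - f v = lam y1 * (g v - g y1) := by
          rw [hlamdef]; field_simp
        have e2 : f y2 - f v = lam y2 * (g v - g y2) := by
          rw [hlamdef]; field_simp
        simp only [map_smul, smul_eq_mul, map_sub]
        linear_combination (g v - g y2) * e1 - (g v - g y1) * e2
          + (g v - g y1) * (g v - g y2) * heq
      have hnotboth : y1 ∉ u ∨ y2 ∉ u := by
        by_contra hb
        push_neg at hb
        have h1 := ((hmem y1).1 hb.1).resolve_left hy1v
        have h2 := ((hmem y2).1 hb.2).resolve_left hy2v
        exact hlamne (h1.2.2.trans h2.2.2.symm)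
      have hussub : u ⊂ t := by
        refine Finset.ssubset_iff_of_subset hut |>.2 ?_
        rcases hnotboth with h | h
        · exact ⟨y1, hy1t, h⟩
        · exact ⟨y2, hy2t, h⟩
      have hucard : u.card ≤ n := by
        have := Finset.card_lt_card hussub
        omega
      have hAFuv : IsAF u {v} := isAF_singleton_of_strict hvu
        (fun y hy hyv => hg y (hut hy) hyv)
      obtain ⟨w, hwu, hwv, hface⟩ := ih u v ys hucard hAFuv hysu hysv
      exact ⟨w, hut hwu, hwv, face_lift ht hAFu ⟨v, hvu⟩ hface⟩

/-- From a non-maximal vertex there is an edge increasing `ℓ`. -/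
lemma exists_up_edge (ℓ : V →L[ℝ] ℝ) : ∀ (n : ℕ) (t : Finset V) (v y₀ : V), t.card ≤ n →
    IsAF t {v} → y₀ ∈ t → ℓ v < ℓ y₀ →
    ∃ w ∈ t, ℓ v < ℓ w ∧ IsFace (convexHull ℝ (t : Set V)) (segment ℝ v w) := by
  intro n
  induction n with
  | zero => intro t v y₀ hcard _ hy₀ _
            exact absurd (Finset.card_pos.2 ⟨y₀, hy₀⟩) (by omega)
  | succ n ih =>
    intro t v y₀ hcard hAF hy₀t hlv
    obtain ⟨hvt, g, hg⟩ := hAF.strict_exposure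
    have ht : t.Nonempty := ⟨v, hvt⟩
    have hy₀v : y₀ ≠ v := fun h => absurd hlv (by rw [h]; exact lt_irrefl _)
    obtain ⟨u, lam, lstar, hAFu, hlamdef, hub, ⟨ys, hysu, hysv, hyslam⟩, hmem⟩ :=
      pivot hvt hg ℓ hy₀t hy₀v
    have hut : u ⊆ t := hAFu.subset
    have hlamy₀ : 0 < lam y₀ := by
      rw [hlamdef]
      exact div_pos (sub_pos.2 hlv) (sub_pos.2 (hg y₀ hy₀t hy₀v))
    have hlstar : 0 < lstar := lt_of_lt_of_le hlamy₀ (hub y₀ hy₀t hy₀v)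
    have hup : ∀ y ∈ t, y ≠ v → lam y = lstar → ℓ v < ℓ y := by
      intro y hy hyv hylam
      have hgap : 0 < g v - g y := sub_pos.2 (hg y hy hyv)
      have hc : ℓ y - ℓ v = lam y * (g v - g y) := by
        rw [hlamdef]; field_simp
      nlinarith
    by_cases hu : u = t
    · obtain ⟨w, hwt, hwv, hface⟩ := exists_edge (n + 1) t v y₀ hcard hAF hy₀t hy₀v
      have hwlam : lam w = lstar := by
        have := (hmem w).1 (hu ▸ hwt)
        rcases this with h | h
        · exact absurd h hwv
        · exact h.2.2
      exact ⟨w, hwt, hup w hwt hwv hwlam, hface⟩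
    · have hvu : v ∈ u := (hmem v).2 (Or.inl rfl)
      have hussub : u ⊂ t := lt_of_le_of_ne hut hu
      have hucard : u.card ≤ n := by
        have := Finset.card_lt_card hussub
        omega
      have hAFuv : IsAF u {v} := isAF_singleton_of_strict hvu
        (fun y hy hyv => hg y (hut hy) hyv)
      have hysup : ℓ v < ℓ ys := hup ys (hut hysu) hysv hyslam
      obtain ⟨w, hwu, hwℓ, hface⟩ := ih u v ys hucard hAFuv hysu hysup
      exact ⟨w, hut hwu, hwℓ, face_lift ht hAFu ⟨v, hvu⟩ hface⟩

/-- Every nonempty polytope has a vertex. -/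
lemma exists_vertex : ∀ (n : ℕ) (t : Finset V), t.card ≤ n → t.Nonempty →
    ∃ v, IsAF t {v} := by
  intro n
  induction n with
  | zero => intro t hcard hne
            exact absurd (Finset.card_pos.2 hne) (by omega)
  | succ n ih =>
    intro t hcard hne
    by_cases h : ∀ l : V →L[ℝ] ℝ, amax l t = t
    · obtain ⟨a, ha⟩ := hne
      have hsing : t = {a} := by
        refine Finset.eq_singleton_iff_unique_mem.2 ⟨ha, fun b hb => ?_⟩
        by_contra hba
        obtain ⟨f, hf⟩ := SeparatingDual.exists_separating_of_ne (R := ℝ) hba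
        have hbm : b ∈ amax f t := (h f).symm ▸ hb
        have ham : a ∈ amax f t := (h f).symm ▸ ha
        exact hf (le_antisymm ((mem_amax.1 ham).2 b hb) ((mem_amax.1 hbm).2 a ha))
      exact ⟨a, 0, by ext y; simp [mem_amax, hsing]⟩
    · push_neg at h
      obtain ⟨l, hl⟩ := h
      have hsub : amax l t ⊂ t := lt_of_le_of_ne amax_subset hl
      have hune : (amax l t).Nonempty := amax_nonempty l hne
      have hcard' : (amax l t).card ≤ n := by
        have := Finset.card_lt_card hsub
        omega
      obtain ⟨v, hv⟩ := ih (amax l t) hcard' hune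
      exact ⟨v, IsAF.trans (t := t) ⟨l, rfl⟩ hv hune⟩

/-- If `ℓ` is nonconstant on edges, each face has a unique `ℓ`-maximizer. -/
lemma max_unique {s u : Finset V} (hs : s.Nonempty) {ℓ : V →L[ℝ] ℝ}
    (hℓ : NonconstOnEdges (convexHull ℝ (s : Set V)) ℓ)
    (hsu : IsAF s u) (hu : u.Nonempty) :
    ∃ m, {x ∈ convexHull ℝ (u : Set V) |
      ∀ y ∈ convexHull ℝ (u : Set V), ℓ y ≤ ℓ x} = {m} := by
  set A := amax ℓ u with hA
  have hAF : IsAF u A := ⟨ℓ, rfl⟩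
  have hAne : A.Nonempty := amax_nonempty ℓ hu
  obtain ⟨m, hm⟩ := exists_vertex A.card A le_rfl hAne
  have hmA : m ∈ A := hm.subset (Finset.mem_singleton_self m)
  have hAm : A = {m} := by
    by_contra hne
    have hex : ∃ y ∈ A, y ≠ m := by
      by_contra hall
      push_neg at hall
      exact hne (Finset.eq_singleton_iff_unique_mem.2 ⟨hmA, hall⟩)
    obtain ⟨y, hyA, hym⟩ := hex
    obtain ⟨w, hwA, hwm, hface⟩ := exists_edge A.card A m y le_rfl hm hyA hym
    have hface1 := face_lift hu hAF hAne hface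
    have hface2 := face_lift hs hsu hu hface1
    refine hℓ m w ⟨fun h => hwm h.symm, hface2⟩ ?_
    exact le_antisymm ((mem_amax.1 hwA).2 m (amax_subset hmA))
      ((mem_amax.1 hmA).2 w (amax_subset hwA))
  refine ⟨m, ?_⟩
  rw [face_hull_amax ℓ hu, ← hA, hAm]
  simp

/-- A vertex of the polytope lying on a face is a vertex of that face. -/
lemma vertex_in_face {s u : Finset V} {v : V}
    (hv : IsAF s {v}) (hsu : IsAF s u) (hvh : v ∈ convexHull ℝ (u : Set V)) :
    v ∈ u ∧ IsAF u {v} := by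
  obtain ⟨l, hl⟩ := hv
  have hvs : v ∈ amax l s := by rw [← hl]; exact Finset.mem_singleton_self v
  have hu : u.Nonempty := by
    rcases u.eq_empty_or_nonempty with h | h
    · rw [h] at hvh; simp at hvh
    · exact h
  have hachieve : v ∈ {x ∈ convexHull ℝ (u : Set V) |
      ∀ y ∈ convexHull ℝ (u : Set V), l y ≤ l x} := by
    refine ⟨hvh, fun y hy => ?_⟩
    exact le_max_on_hull hvs (convexHull_mono (by exact_mod_cast hsu.subset) hy)
  rw [face_hull_amax l hu] at hachieve
  have hsub : amax l u ⊆ {v} := by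
    intro y hy
    have h1 : l y ≤ l v := le_max_on_hull hvs
      (subset_convexHull ℝ _ (by exact_mod_cast hsu.subset (amax_subset hy)))
    have h2 : l v ≤ l y := le_max_on_hull hy hvh
    have hyv : y ∈ amax l s := mem_amax.2 ⟨hsu.subset (amax_subset hy),
      fun z hz => ((mem_amax.1 hvs).2 z hz).trans (le_antisymm h2 h1).le⟩
    rw [← hl] at hyv
    exact hyv
  obtain ⟨a, ha⟩ := amax_nonempty l hu
  have hav : a = v := Finset.mem_singleton.1 (hsub ha)
  have heq : amax l u = {v} := Finset.Subset.antisymm hsub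
    (Finset.singleton_subset_iff.2 (hav ▸ ha))
  exact ⟨amax_subset (heq ▸ Finset.mem_singleton_self v), ⟨l, heq.symm⟩⟩

lemma exists_pos_functional {v w : V} (hvw : v ≠ w) :
    ∃ f : V →L[ℝ] ℝ, 0 < f (w - v) := by
  obtain ⟨l, hl⟩ := SeparatingDual.exists_ne_zero (R := ℝ) (sub_ne_zero.2 (Ne.symm hvw))
  rcases hl.lt_or_gt with h | h
  · exact ⟨-l, by simpa using h⟩
  · exact ⟨l, h⟩

lemma segment_endpoint_face {v w : V} (hvw : v ≠ w) :
    IsFace (segment ℝ v w) {w} := by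
  obtain ⟨f, hf⟩ := exists_pos_functional hvw
  refine ⟨⟨w, rfl⟩, fun _ => ⟨f, ?_⟩⟩
  ext x
  simp only [Set.mem_singleton_iff, Set.mem_setOf_eq]
  constructor
  · intro hxw
    rw [hxw]
    refine ⟨right_mem_segment ℝ v w, fun y hy => ?_⟩
    rw [segment_eq_image'] at hy
    obtain ⟨θ, ⟨h0, h1⟩, rfl⟩ := hy
    have e1 : f (v + θ • (w - v)) = f v + θ * (f w - f v) := by simp [map_sub]
    have e2 : f w - f v = f (w - v) := by simp [map_sub]
    rw [e1]
    nlinarith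
  · rintro ⟨hx, hmax⟩
    have hw' := hmax w (right_mem_segment ℝ v w)
    rw [segment_eq_image'] at hx
    obtain ⟨θ, ⟨h0, h1⟩, rfl⟩ := hx
    have e1 : f (v + θ • (w - v)) = f v + θ * (f w - f v) := by simp [map_sub]
    have e2 : f w - f v = f (w - v) := by simp [map_sub]
    rw [e1] at hw'
    have hθ : θ = 1 := by nlinarith
    show v + θ • (w - v) = w
    rw [hθ, one_smul]
    abel

lemma edge_vertex_right {s : Finset V} (hs : s.Nonempty) {v w : V}
    (hface : IsFace (convexHull ℝ (s : Set V)) (segment ℝ v w)) (hvw : v ≠ w) :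
    IsVertex (convexHull ℝ (s : Set V)) w := by
  obtain ⟨u, hsu, hu⟩ := (isFace_iff hs).1 hface
  have hune : u.Nonempty := by
    rcases u.eq_empty_or_nonempty with h | h
    · rw [h] at hu
      simp only [Finset.coe_empty, convexHull_empty] at hu
      exact absurd hu (Set.Nonempty.ne_empty ⟨w, right_mem_segment ℝ v w⟩)
    · exact h
  have : IsFace (convexHull ℝ (u : Set V)) {w} := hu ▸ segment_endpoint_face hvw
  exact face_lift hs hsu hune this

lemma maxAt_segment {ℓ : V →L[ℝ] ℝ} {v w : V} (h : ℓ v ≤ ℓ w) :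
    MaxAt ℓ (segment ℝ v w) w := by
  refine ⟨right_mem_segment ℝ v w, fun x hx => ?_⟩
  rw [segment_eq_image'] at hx
  obtain ⟨θ, ⟨h0, h1⟩, rfl⟩ := hx
  have e1 : ℓ (v + θ • (w - v)) = ℓ v + θ * (ℓ w - ℓ v) := by simp [map_sub]
  rw [e1]
  nlinarith

/-- The left endpoint of a nondegenerate segment lies in the closure of its
relative interior. -/
lemma left_mem_closure_intrinsicInterior_segment {v u : V} (hvu : v ≠ u) :
    v ∈ closure (intrinsicInterior ℝ (segment ℝ v u)) := by
  obtain ⟨f, hf⟩ := exists_pos_functional hvu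
  have hfv : f v < f u := by
    have : f u - f v = f (u - v) := by simp [map_sub]
    linarith [hf, this]
  set S := segment ℝ v u with hS
  have hspan : affineSpan ℝ S = line[ℝ, v, u] := by
    rw [hS, ← convexHull_pair, affineSpan_convexHull]
  have hint : ∀ a : ℝ, a ∈ Set.Ioo (0:ℝ) 1 → v + a • (u - v) ∈ intrinsicInterior ℝ S := by
    intro a ha
    have hxa : v + a • (u - v) ∈ S := by
      rw [hS, segment_eq_image']
      exact ⟨a, ⟨ha.1.le, ha.2.le⟩, rfl⟩
    refine mem_intrinsicInterior.2 ⟨⟨v + a • (u - v), subset_affineSpan ℝ S hxa⟩, ?_, rfl⟩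
    set U : Set (affineSpan ℝ S) := ((↑) : affineSpan ℝ S → V) ⁻¹' (f ⁻¹' Set.Ioo (f v) (f u))
      with hU
    have hUopen : IsOpen U :=
      (isOpen_Ioo.preimage f.continuous).preimage continuous_subtype_val
    have hUsub : U ⊆ ((↑) : affineSpan ℝ S → V) ⁻¹' S := by
      rintro ⟨z, hz⟩ hzU
      simp only [hU, Set.mem_preimage] at hzU
      have hz' : z ∈ line[ℝ, v, u] := hspan ▸ hz
      have hvadd : (z - v) +ᵥ v ∈ line[ℝ, v, u] := by
        have hza : (z - v) +ᵥ v = z := by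
          rw [vadd_eq_add]; abel
        rw [hza]; exact hz'
      obtain ⟨r, hr⟩ := vadd_left_mem_affineSpan_pair.1 hvadd
      rw [vsub_eq_sub] at hr
      have hzr : z = v + r • (u - v) := by
        rw [hr]; abel
      have hfz : f z = f v + r * (f u - f v) := by
        rw [hzr]; simp [map_sub]
      have h0r : 0 < r := by nlinarith [hzU.1]
      have h1r : r < 1 := by nlinarith [hzU.2]
      show z ∈ S
      rw [hS, segment_eq_image']
      exact ⟨r, ⟨h0r.le, h1r.le⟩, hzr.symm⟩
    have hmemU : (⟨v + a • (u - v), subset_affineSpan ℝ S hxa⟩ : affineSpan ℝ S) ∈ U := by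
      simp only [hU, Set.mem_preimage]
      have hfa : f (v + a • (u - v)) = f v + a * (f u - f v) := by
        simp [map_sub]
      constructor
      · rw [hfa]; nlinarith [ha.1, ha.2]
      · rw [hfa]; nlinarith [ha.1, ha.2]
    exact (hUopen.subset_interior_iff.2 hUsub) hmemU
  have hseq : Filter.Tendsto (fun n : ℕ => v + (1 / (n + 2) : ℝ) • (u - v))
      Filter.atTop (nhds v) := by
    have hden : Filter.Tendsto (fun n : ℕ => (n : ℝ) + 2) Filter.atTop Filter.atTop :=
      Filter.tendsto_atTop_add_const_right _ 2 tendsto_natCast_atTop_atTop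
    have h1 : Filter.Tendsto (fun n : ℕ => (1 / (n + 2) : ℝ)) Filter.atTop (nhds 0) := by
      simpa [one_div, Pi.inv_def] using hden.inv_tendsto_atTop
    have h2 : Filter.Tendsto (fun c : ℝ => v + c • (u - v)) (nhds 0) (nhds v) := by
      have : Continuous (fun c : ℝ => v + c • (u - v)) := by continuity
      have h3 := this.tendsto 0
      simpa using h3
    exact h2.comp h1
  refine mem_closure_of_tendsto hseq (Filter.Eventually.of_forall fun n => ?_)
  apply hint
  constructor
  · positivity
  · rw [div_lt_one (by positivity)]
    have : (0:ℝ) ≤ (n:ℝ) := Nat.cast_nonneg n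
    linarith

lemma mem_face_of_mem_Fneg {s : Finset V} (hs : s.Nonempty) {ℓ : V →L[ℝ] ℝ} {w v : V}
    (hv : v ∈ Fneg (convexHull ℝ (s : Set V)) ℓ w) :
    ∃ G, IsFace (convexHull ℝ (s : Set V)) G ∧ MaxAt ℓ G w ∧ v ∈ G := by
  classical
  set P := convexHull ℝ (s : Set V) with hP
  set 𝒢 := {G : Set V | IsFace P G ∧ MaxAt ℓ G w} with h𝒢
  have hfin : 𝒢.Finite := by
    apply Set.Finite.subset (Set.Finite.image (fun u : Finset V => convexHull ℝ (u : Set V))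
      s.powerset.finite_toSet)
    intro G hG
    obtain ⟨u, hu, rfl⟩ := (isFace_iff hs).1 hG.1
    exact ⟨u, by simpa using hu.subset, rfl⟩
  have hOsub : Oneg P ℓ w ⊆ ⋃ G ∈ 𝒢, G :=
    Set.iUnion₂_mono fun G _ => intrinsicInterior_subset
  have hcl : Fneg P ℓ w ⊆ ⋃ G ∈ 𝒢, closure G := by
    rw [← Set.Finite.closure_biUnion hfin]
    exact closure_mono hOsub
  have hv' := hcl hv
  rw [Set.mem_iUnion₂] at hv'
  obtain ⟨G, hG, hvG⟩ := hv'
  refine ⟨G, hG.1, hG.2, ?_⟩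
  obtain ⟨u, hu, rfl⟩ := (isFace_iff hs).1 hG.1
  rwa [IsClosed.closure_eq (u.finite_toSet.isCompact_convexHull (𝕜 := ℝ)).isClosed] at hvG

lemma mem_Fneg_of_face {P : Set V} {ℓ : V →L[ℝ] ℝ} {w v : V} {G : Set V}
    (hG : IsFace P G) (hmax : MaxAt ℓ G w) (hv : v ∈ closure (intrinsicInterior ℝ G)) :
    v ∈ Fneg P ℓ w := by
  apply closure_mono _ hv
  intro x hx
  exact Set.mem_biUnion (show G ∈ {G | IsFace P G ∧ MaxAt ℓ G w} from ⟨hG, hmax⟩) hx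

lemma path_step {s u : Finset V} (hs : s.Nonempty) {ℓ : V →L[ℝ] ℝ}
    (hℓ : NonconstOnEdges (convexHull ℝ (s : Set V)) ℓ)
    (hsu : IsAF s u) {v w : V} (hv : IsAF s {v}) (hvh : v ∈ convexHull ℝ (u : Set V))
    (hw : MaxAt ℓ (convexHull ℝ (u : Set V)) w) :
    v = w ∨ ∃ w1 ∈ u, ℓ v < ℓ w1 ∧ DirEdge (convexHull ℝ (s : Set V)) ℓ v w1
      ∧ IsAF s {w1} := by
  have hu : u.Nonempty := by
    rcases u.eq_empty_or_nonempty with h | h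
    · rw [h] at hvh; simp at hvh
    · exact h
  obtain ⟨hvu, hAFuv⟩ := vertex_in_face hv hsu hvh
  obtain ⟨m, hm⟩ := max_unique hs hℓ hsu hu
  have hwm : w = m := by
    have hwmem : w ∈ ({m} : Set V) := hm ▸ (⟨hw.1, hw.2⟩ :
      w ∈ {x ∈ convexHull ℝ (u : Set V) | ∀ y ∈ convexHull ℝ (u : Set V), ℓ y ≤ ℓ x})
    exact hwmem
  by_cases hvw : v = w
  · exact Or.inl hvw
  · right
    have hvle : ℓ v ≤ ℓ w := hw.2 v hvh
    have hvlt : ℓ v < ℓ w := by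
      rcases lt_or_eq_of_le hvle with h | h
      · exact h
      · exfalso
        apply hvw
        have hvmem : v ∈ ({m} : Set V) := hm ▸ (⟨hvh, fun y hy => (hw.2 y hy).trans h.symm.le⟩ :
          v ∈ {x ∈ convexHull ℝ (u : Set V) | ∀ y ∈ convexHull ℝ (u : Set V), ℓ y ≤ ℓ x})
        exact (show v = m from hvmem).trans hwm.symm
    obtain ⟨y₀, hy₀⟩ := amax_nonempty ℓ hu
    have hy₀u : y₀ ∈ u := amax_subset hy₀
    have hy₀ℓ : ℓ v < ℓ y₀ := hvlt.trans_le (le_max_on_hull hy₀ hw.1)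
    obtain ⟨w1, hw1u, hw1ℓ, hface⟩ := exists_up_edge ℓ u.card u v y₀ le_rfl hAFuv hy₀u hy₀ℓ
    have hfaceP := face_lift hs hsu hu hface
    have hvw1 : v ≠ w1 := fun h => absurd hw1ℓ (by rw [h]; exact lt_irrefl _)
    have hw1vert := edge_vertex_right hs hfaceP hvw1
    exact ⟨w1, hw1u, hw1ℓ, ⟨⟨hvw1, hfaceP⟩, hw1ℓ⟩, (vertex_iff hs).1 hw1vert⟩

lemma path_lemma {s : Finset V} (hs : s.Nonempty) {ℓ : V →L[ℝ] ℝ}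
    (hℓ : NonconstOnEdges (convexHull ℝ (s : Set V)) ℓ) :
    ∀ (n : ℕ) (u : Finset V) (v w : V),
      (u.filter (fun y => ℓ v < ℓ y)).card ≤ n →
      IsAF s u → IsAF s {v} → v ∈ convexHull ℝ (u : Set V) →
      MaxAt ℓ (convexHull ℝ (u : Set V)) w →
      Relation.ReflTransGen (DirEdge (convexHull ℝ (s : Set V)) ℓ) v w := by
  classical
  intro n
  induction n with
  | zero =>
    intro u v w hcard hsu hv hvh hw
    rcases path_step hs hℓ hsu hv hvh hw with rfl | ⟨w1, hw1u, hw1ℓ, _, _⟩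
    · exact Relation.ReflTransGen.refl
    · exfalso
      have hmem : w1 ∈ u.filter (fun y => ℓ v < ℓ y) := Finset.mem_filter.2 ⟨hw1u, hw1ℓ⟩
      have := Finset.card_pos.2 ⟨w1, hmem⟩
      omega
  | succ n ih =>
    intro u v w hcard hsu hv hvh hw
    rcases path_step hs hℓ hsu hv hvh hw with rfl | ⟨w1, hw1u, hw1ℓ, hedge, hw1v⟩
    · exact Relation.ReflTransGen.refl
    · refine Relation.ReflTransGen.head hedge
        (ih u w1 w ?_ hsu hw1v (subset_convexHull ℝ _ (Finset.mem_coe.2 hw1u)) hw)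
      have hsub : u.filter (fun y => ℓ w1 < ℓ y) ⊂ u.filter (fun y => ℓ v < ℓ y) := by
        constructor
        · intro y hy
          have hy' := Finset.mem_filter.1 hy
          exact Finset.mem_filter.2 ⟨hy'.1, hw1ℓ.trans hy'.2⟩
        · intro hcon
          have hmem : w1 ∈ u.filter (fun y => ℓ v < ℓ y) := Finset.mem_filter.2 ⟨hw1u, hw1ℓ⟩
          have := Finset.mem_filter.1 (hcon hmem)
          exact absurd this.2 (lt_irrefl _)
      have := Finset.card_lt_card hsub
      omega

theorem stmt12_aux (P : Set V) (hP : IsPolytope P) (ℓ : V →L[ℝ] ℝ)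
    (hℓ : NonconstOnEdges P ℓ) (hstrat : StratNeg P ℓ) :
    ∀ v w : V, IsVertex P v → IsVertex P w →
      (v ∈ Fneg P ℓ w ↔ Relation.ReflTransGen (DirEdge P ℓ) v w) := by
  obtain ⟨s, hs, rfl⟩ := hP
  intro v w hv hw
  have hvAF : IsAF s {v} := (vertex_iff hs).1 hv
  constructor
  · intro hvF
    obtain ⟨G, hGface, hGmax, hvG⟩ := mem_face_of_mem_Fneg hs hvF
    obtain ⟨u, hsu, rfl⟩ := (isFace_iff hs).1 hGface
    exact path_lemma hs hℓ _ u v w le_rfl hsu hvAF hvG hGmax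
  · intro hchain
    clear hvAF hv
    induction hchain using Relation.ReflTransGen.head_induction_on with
    | refl =>
      apply mem_Fneg_of_face (G := {w}) hw
        ⟨rfl, fun x hx => by rw [Set.eq_of_mem_singleton hx]⟩
      rw [intrinsicInterior_singleton]
      exact subset_closure rfl
    | head hstep _ ih =>
      rename_i a b _
      have hb_vert : IsVertex (convexHull ℝ (s : Set V)) b :=
        edge_vertex_right hs hstep.1.2 hstep.1.1
      have hab : a ∈ Fneg (convexHull ℝ (s : Set V)) ℓ b :=
        mem_Fneg_of_face hstep.1.2 (maxAt_segment hstep.2.le)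
          (left_mem_closure_intrinsicInterior_segment hstep.1.1)
      have hbO : b ∈ Oneg (convexHull ℝ (s : Set V)) ℓ b := by
        apply Set.mem_biUnion
          (show ({b} : Set V) ∈ {G | IsFace (convexHull ℝ (s : Set V)) G ∧ MaxAt ℓ G b} from
            ⟨hb_vert, ⟨rfl, fun x hx => by rw [Set.eq_of_mem_singleton hx]⟩⟩)
        rw [intrinsicInterior_singleton]
        exact rfl
      have hsub := hstrat b w hb_vert hw ⟨b, hbO, ih⟩
      have hsub' : Fneg (convexHull ℝ (s : Set V)) ℓ b ⊆ Fneg (convexHull ℝ (s : Set V)) ℓ w :=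
        closure_minimal hsub isClosed_closure
      exact hsub' hab

/-- If `O⁻` is a stratification, then the negative Bruhat relation
`B⁻ (v,w) ↔ v ∈ F⁻(w)` coincides with the chain order `C` on vertices of `P`. -/
theorem stmt12 (P : Set V) (hP : IsPolytope P) (ℓ : V →L[ℝ] ℝ)
    (hℓ : NonconstOnEdges P ℓ) (hstrat : StratNeg P ℓ) :
    ∀ v w : V, IsVertex P v → IsVertex P w →
      (v ∈ Fneg P ℓ w ↔ Relation.ReflTransGen (DirEdge P ℓ) v w) := by
  exact stmt12_aux P hP ℓ hℓ hstrat
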